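/- The operator ∇̃_{·} f_n is not Hilbert-Schmidt: the series Σ_{m≥1} (⟨∇̃_{f_m} f_n, ∇̃_{f_m} f_n⟩ + ⟨∇̃_{g_m} f_n, ∇̃_{g_m} f_n⟩) over the orthonormal-type basis diverges; specifically Σ_{m>n} λ_{m,n}² θ_{n+m}/(θ_n θ_m) = +∞. -/

import Mathlib

open Filter

/-- `θ_k = 2hk + (c/12)(k³ - k)` -/
noncomputable def th (c h : ℝ) (k : ℤ) : ℝ := 2 * h * k + c / 12 * ((k : ℝ) ^ 3 - k)

/-- `λ_{m,n} = (2n+m)θ_m / (2θ_{m+n})` -/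
noncomputable def lam (c h : ℝ) (m n : ℤ) : ℝ :=
  (2 * (n : ℝ) + m) * th c h m / (2 * th c h (m + n))

/-- the `m`-th term `⟨∇̃_{f_m} f_n, ∇̃_{f_m} f_n⟩ + ⟨∇̃_{g_m} f_n, ∇̃_{g_m} f_n⟩`
of the Hilbert-Schmidt series for `∇̃_· f_n` -/
noncomputable def hsTerm (c h : ℝ) (n m : ℕ) : ℝ :=
  if m < n then
    lam c h m n ^ 2 * th c h (n + m) / (th c h n * th c h m)
      + ((m : ℝ) + n) ^ 2 * th c h (n - m) / (4 * th c h n * th c h m)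
  else if m = n then lam c h n n ^ 2 * th c h (2 * n) / (th c h n ^ 2)
  else lam c h m n ^ 2 * th c h (n + m) / (th c h n * th c h m)

lemma thpos (c h : ℝ) (hc : 0 < c) (hh : 0 < h) (k : ℤ) (hk : 1 ≤ k) :
    0 < th c h k := by
  have hk' : (1 : ℝ) ≤ (k : ℝ) := by exact_mod_cast hk
  have hk0 : (0:ℝ) ≤ (k:ℝ) := le_trans zero_le_one hk'
  have hcube : (0:ℝ) ≤ (k:ℝ)^3 - k := by
    nlinarith [mul_nonneg (mul_nonneg hk0 (sub_nonneg.2 hk')) (by linarith : (0:ℝ) ≤ (k:ℝ) + 1)]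
  unfold th
  nlinarith [mul_nonneg hc.le hcube, mul_pos hh (lt_of_lt_of_le one_pos hk')]

lemma thmono (c h : ℝ) (hc : 0 < c) (hh : 0 < h) (j k : ℤ) (hj : 1 ≤ j) (hjk : j ≤ k) :
    th c h j ≤ th c h k := by
  have hj' : (1 : ℝ) ≤ (j : ℝ) := by exact_mod_cast hj
  have hk' : (1 : ℝ) ≤ (k : ℝ) := le_trans hj' (by exact_mod_cast hjk)
  have hjk' : (j : ℝ) ≤ (k : ℝ) := by exact_mod_cast hjk
  have key : (0:ℝ) ≤ (k:ℝ)^2 + k*j + j^2 - 1 := by nlinarith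
  unfold th
  nlinarith [mul_nonneg (sub_nonneg.2 hjk') hh.le,
    mul_nonneg (mul_nonneg (sub_nonneg.2 hjk') hc.le) key]

/-- The operator `∇̃_· f_n` is not Hilbert-Schmidt: the series
`Σ_{m≥1} (⟨∇̃_{f_m}f_n, ∇̃_{f_m}f_n⟩ + ⟨∇̃_{g_m}f_n, ∇̃_{g_m}f_n⟩)` diverges to `+∞`;
specifically `Σ_{m>n} λ_{m,n}² θ_{n+m}/(θ_n θ_m) = +∞`. -/
theorem nablaTilde_not_HS (c h : ℝ) (hc : 0 < c) (hh : 0 < h) (n : ℕ) (hn : 1 ≤ n) :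
    Tendsto (fun M => ∑ m ∈ Finset.Icc 1 M, hsTerm c h n m) atTop atTop ∧
    Tendsto (fun M => ∑ m ∈ Finset.Icc (n + 1) M,
      lam c h m n ^ 2 * th c h (n + m) / (th c h n * th c h m)) atTop atTop := by
  set f : ℕ → ℝ := fun m => lam c h m n ^ 2 * th c h (n + m) / (th c h n * th c h m) with hf
  have hdn : 0 < th c h n := thpos c h hc hh n (by exact_mod_cast hn)
  have hfpos : ∀ m : ℕ, 1 ≤ m → 0 ≤ f m := by
    intro m hm
    have h1 : 0 < th c h (↑n + ↑m) := thpos c h hc hh _ (by omega)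
    have h2 : 0 < th c h m := thpos c h hc hh _ (by exact_mod_cast hm)
    simp only [hf]
    positivity
  have hfeq : ∀ m : ℕ, 1 ≤ m → f m =
      (2 * (n:ℝ) + m) ^ 2 * th c h m / (4 * th c h (↑n + ↑m) * th c h n) := by
    intro m hm
    have hB : 0 < th c h (↑n + ↑m) := thpos c h hc hh _ (by omega)
    have hA : 0 < th c h m := thpos c h hc hh _ (by exact_mod_cast hm)
    have hcomm : ((m : ℤ) + n) = (n : ℤ) + m := by ring
    simp only [hf, lam, hcomm]
    field_simp
    push_cast
    ring
  obtain ⟨M₁, hM₁⟩ := exists_nat_ge (36 * th c h n)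
  set M₀ : ℕ := max M₁ (max 3 (n + 1)) with hM₀
  have hM₀n : n + 1 ≤ M₀ := le_max_of_le_right (le_max_right _ _)
  have hf1 : ∀ m : ℕ, M₀ ≤ m → 1 ≤ f m := by
    intro m hm
    have hm3 : (3 : ℕ) ≤ m := le_trans (le_max_of_le_right (le_max_left _ _)) hm
    have hm1 : (1 : ℕ) ≤ m := by omega
    have hm36 : 36 * th c h n ≤ (m : ℝ) :=
      le_trans hM₁ (by exact_mod_cast le_trans (le_max_left _ _) hm)
    have hA : 0 < th c h m := thpos c h hc hh _ (by exact_mod_cast hm1)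
    have hB : 0 < th c h (↑n + ↑m) := thpos c h hc hh _ (by omega)
    have h2m : th c h (↑n + ↑m) ≤ th c h (2 * m) :=
      thmono c h hc hh _ _ (by omega) (by omega)
    have h9 : th c h (2 * m) ≤ 9 * th c h m := by
      have hm3' : (3 : ℝ) ≤ (m : ℝ) := by exact_mod_cast hm3
      unfold th
      push_cast
      nlinarith [mul_nonneg hc.le (mul_nonneg (sub_nonneg.2 hm3')
        (by positivity : (0:ℝ) ≤ (m:ℝ)^2 + 3 * m)),
        mul_pos hh (by positivity : (0:ℝ) < (m:ℝ))]
    have hB9 : th c h (↑n + ↑m) ≤ 9 * th c h m := le_trans h2m h9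
    have hm1' : (1 : ℝ) ≤ (m : ℝ) := by exact_mod_cast hm1
    have hn0 : (0 : ℝ) ≤ (n : ℝ) := by positivity
    have hm0 : (0 : ℝ) ≤ (m : ℝ) := by positivity
    rw [hfeq m hm1, le_div_iff₀ (by positivity)]
    nlinarith [mul_le_mul_of_nonneg_right hB9 hdn.le,
      mul_le_mul_of_nonneg_right hm36 hA.le,
      mul_nonneg (mul_nonneg (sub_nonneg.2 hm1') hm0) hA.le,
      mul_nonneg (mul_nonneg hn0 hn0) hA.le,
      mul_nonneg (mul_nonneg hn0 hm0) hA.le]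
  -- lower bound on partial sums
  have key : ∀ M, M₀ ≤ M → (M : ℝ) + -(M₀ : ℝ) ≤ ∑ m ∈ Finset.Icc (n + 1) M, f m := by
    intro M hM
    have hsub : Finset.Icc M₀ M ⊆ Finset.Icc (n + 1) M := Finset.Icc_subset_Icc hM₀n le_rfl
    have h1 : ∑ m ∈ Finset.Icc M₀ M, f m ≤ ∑ m ∈ Finset.Icc (n + 1) M, f m :=
      Finset.sum_le_sum_of_subset_of_nonneg hsub
        (fun m hm _ => hfpos m (by have := (Finset.mem_Icc.1 hm).1; omega))
    have h2 : (Finset.Icc M₀ M).card • (1:ℝ) ≤ ∑ m ∈ Finset.Icc M₀ M, f m :=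
      Finset.card_nsmul_le_sum _ _ _ (fun m hm => hf1 m (Finset.mem_Icc.1 hm).1)
    rw [Nat.card_Icc, nsmul_eq_mul, mul_one] at h2
    have h3 : ((M + 1 - M₀ : ℕ) : ℝ) = (M:ℝ) + 1 - M₀ := by
      rw [Nat.cast_sub (by omega)]; push_cast; ring
    rw [h3] at h2
    linarith
  have T2 : Tendsto (fun M => ∑ m ∈ Finset.Icc (n + 1) M, f m) atTop atTop :=
    tendsto_atTop_mono' atTop (eventually_atTop.2 ⟨M₀, key⟩)
      (tendsto_atTop_add_const_right atTop (-(M₀:ℝ)) tendsto_natCast_atTop_atTop)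
  -- hsTerm is nonneg and agrees with f above n
  have hsEq : ∀ m : ℕ, n + 1 ≤ m → hsTerm c h n m = f m := by
    intro m hm
    unfold hsTerm
    rw [if_neg (by omega), if_neg (by omega)]
  have hhs : ∀ m : ℕ, 1 ≤ m → 0 ≤ hsTerm c h n m := by
    intro m hm
    unfold hsTerm
    split_ifs with h1 h2
    · have hA : 0 < th c h m := thpos c h hc hh _ (by exact_mod_cast hm)
      have hB : 0 < th c h (↑n + ↑m) := thpos c h hc hh _ (by omega)
      have hC : 0 < th c h (↑n - ↑m) := thpos c h hc hh _ (by omega)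
      positivity
    · have h2n : 0 < th c h (2 * n) := thpos c h hc hh _ (by omega)
      positivity
    · exact hfpos m hm
  have hmono : ∀ M, ∑ m ∈ Finset.Icc (n + 1) M, f m ≤ ∑ m ∈ Finset.Icc 1 M, hsTerm c h n m := by
    intro M
    have e1 : ∑ m ∈ Finset.Icc (n + 1) M, f m = ∑ m ∈ Finset.Icc (n + 1) M, hsTerm c h n m :=
      Finset.sum_congr rfl (fun m hm => (hsEq m (Finset.mem_Icc.1 hm).1).symm)
    rw [e1]
    exact Finset.sum_le_sum_of_subset_of_nonneg
      (Finset.Icc_subset_Icc (by omega) le_rfl)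
      (fun m hm _ => hhs m (Finset.mem_Icc.1 hm).1)
  exact ⟨tendsto_atTop_mono hmono T2, T2⟩
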